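/- Let R be a finite commutative ring, n a positive integer with n·1_R = 0, and χ a non-degenerate additive character of R (so that r ↦ χ_r is injective). Let H be a subgroup of (ℤ/n)ˣ and let T be a symmetric subset of R. Then the following are equivalent: (1) for every integer a whose residue class mod n lies in H and every r ∈ R, Σ_{t∈T} χ(a·r·t) = Σ_{t∈T} χ(r·t) (i.e. all eigenvalues of Γ(R,T) are fixed by the Galois automorphisms of ℚ(ζ_n) corresponding to H, so Γ(R,T) is K-rational for K = ℚ(ζ_n)^H); (2) for every integer a whose residue class mod n lies in H, the image of T under x ↦ a·x equals T (i.e. Γ(R,T) is U₁-unitary, where U₁ is the image of H in Rˣ). -/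

import Mathlib

/-- Let `R` be a finite commutative ring, `n` a positive integer with
`n·1_R = 0`, and `χ` a non-degenerate additive character of `R` (its kernel contains no
nonzero ideal). Let `H` be a subgroup of `(ℤ/n)ˣ` and `T` a symmetric subset of `R`.
Then the following are equivalent: (1) for every integer `a` whose residue class mod `n`
lies in `H` and every `r ∈ R`, `Σ_{t∈T} χ(a·r·t) = Σ_{t∈T} χ(r·t)` (all eigenvalues of
`Γ(R,T)` are fixed by the Galois automorphisms corresponding to `H`, i.e. `Γ(R,T)` is
`ℚ(ζ_n)^H`-rational); (2) for every such `a`, the image of `T` under `x ↦ a·x` equals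
`T` (i.e. `Γ(R,T)` is `U₁`-unitary for the image `U₁` of `H` in `Rˣ`). -/
theorem stmt13 {R : Type*} [CommRing R] [Fintype R] [DecidableEq R]
    (n : ℕ) (hn : 0 < n) (hchar : (n : R) = 0)
    (χ : AddChar R ℂ)
    (hnd : ∀ I : Ideal R, (∀ x ∈ I, χ x = 1) → I = ⊥)
    (H : Subgroup (ZMod n)ˣ)
    (T : Finset R) (hTsymm : ∀ t ∈ T, -t ∈ T) (hT0 : (0 : R) ∉ T) :
    (∀ a : ℤ, (∃ h ∈ H, ((h : (ZMod n)ˣ) : ZMod n) = (a : ZMod n)) →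
        ∀ r : R, ∑ t ∈ T, χ (a • (r * t)) = ∑ t ∈ T, χ (r * t)) ↔
      (∀ a : ℤ, (∃ h ∈ H, ((h : (ZMod n)ˣ) : ZMod n) = (a : ZMod n)) →
        Finset.image (fun x : R => a • x) T = T) := by
  classical
  haveI : NeZero n := ⟨hn.ne'⟩
  -- orthogonality: for z ≠ 0, the character r ↦ χ (z * r) is nontrivial, so its sum is 0
  have horth : ∀ z : R, ∑ r : R, χ (r * z) = if z = 0 then (Fintype.card R : ℂ) else 0 := by
    intro z
    split_ifs with hz
    · simp [hz]
    · have hne : AddChar.mulShift χ z ≠ 0 := by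
        intro h0
        have hker : ∀ x ∈ Ideal.span {z}, χ x = 1 := by
          intro x hx
          obtain ⟨c, hc⟩ := Ideal.mem_span_singleton'.mp hx
          have := AddChar.eq_zero_iff.mp h0 c
          rwa [AddChar.mulShift_apply, mul_comm, hc] at this
        have := hnd _ hker
        exact hz (by simpa [this] using Ideal.mem_span_singleton_self z)
      have := AddChar.sum_eq_zero_iff_ne_zero.mpr hne
      simpa [AddChar.mulShift_apply, mul_comm] using this
  -- Fourier inversion: equal eigenvalue sums force equal finsets
  have key : ∀ S S' : Finset R,
      (∀ r : R, ∑ s ∈ S, χ (r * s) = ∑ s ∈ S', χ (r * s)) → S = S' := by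
    intro S S' hSS'
    have main : ∀ U : Finset R, ∀ x : R,
        ∑ r : R, ∑ s ∈ U, χ (r * (s - x)) =
          if x ∈ U then (Fintype.card R : ℂ) else 0 := by
      intro U x
      rw [Finset.sum_comm]
      rw [Finset.sum_congr rfl (fun s _ => horth (s - x))]
      simp [sub_eq_zero, Finset.sum_ite_eq', Finset.sum_ite_eq]
    ext x
    have hA : ∑ r : R, ∑ s ∈ S, χ (r * (s - x)) =
        ∑ r : R, ∑ s ∈ S', χ (r * (s - x)) := by
      refine Finset.sum_congr rfl fun r _ => ?_
      have expand : ∀ U : Finset R, ∑ s ∈ U, χ (r * (s - x)) =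
          χ (r * (-x)) * ∑ s ∈ U, χ (r * s) := by
        intro U
        rw [Finset.mul_sum]
        refine Finset.sum_congr rfl fun s _ => ?_
        rw [← AddChar.map_add_eq_mul]
        ring_nf
      rw [expand, expand, hSS' r]
    rw [main S x, main S' x] at hA
    have hc : (Fintype.card R : ℂ) ≠ 0 := by
      exact_mod_cast Fintype.card_ne_zero
    by_cases hx : x ∈ S <;> by_cases hx' : x ∈ S' <;>
      simp_all
  -- a is invertible in R when its class mod n lies in H
  have hinj : ∀ a : ℤ, (∃ h ∈ H, ((h : (ZMod n)ˣ) : ZMod n) = (a : ZMod n)) →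
      Function.Injective (fun x : R => a • x) := by
    rintro a ⟨h, -, hha⟩
    set b : ℤ := (((h⁻¹ : (ZMod n)ˣ) : ZMod n).val : ℤ) with hb
    have hbcast : ((b : ℤ) : ZMod n) = ((h⁻¹ : (ZMod n)ˣ) : ZMod n) := by
      simp [hb]
    have hmod : ((a * b - 1 : ℤ) : ZMod n) = 0 := by
      push_cast
      rw [← hha]
      push_cast [hbcast]
      rw [← Units.val_mul, mul_inv_cancel]
      simp
    have hdvd : (n : ℤ) ∣ a * b - 1 := by
      exact_mod_cast (ZMod.intCast_zmod_eq_zero_iff_dvd _ n).mp hmod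
    obtain ⟨k, hk⟩ := hdvd
    have hu : (a : R) * (b : R) = 1 := by
      have : ((a * b : ℤ) : R) = ((1 + n * k : ℤ) : R) := by
        congr 1; linarith
      push_cast [hchar] at this
      simpa using this
    have hunit : IsUnit (a : R) := IsUnit.of_mul_eq_one _ hu
    intro x y hxy
    simp only [zsmul_eq_mul] at hxy
    exact hunit.mul_right_injective hxy
  constructor
  · intro h1 a ha
    refine key _ _ fun r => ?_
    rw [Finset.sum_image (fun x _ y _ hxy => hinj a ha hxy)]
    calc ∑ t ∈ T, χ (r * (a • t)) = ∑ t ∈ T, χ (a • (r * t)) := by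
          refine Finset.sum_congr rfl fun t _ => ?_
          rw [mul_smul_comm]
        _ = ∑ t ∈ T, χ (r * t) := h1 a ha r
  · intro h2 a ha r
    calc ∑ t ∈ T, χ (a • (r * t)) = ∑ t ∈ T, χ (r * (a • t)) := by
          refine Finset.sum_congr rfl fun t _ => ?_
          rw [mul_smul_comm]
        _ = ∑ s ∈ Finset.image (fun x : R => a • x) T, χ (r * s) := by
          rw [Finset.sum_image (fun x _ y _ hxy => hinj a ha hxy)]
        _ = ∑ t ∈ T, χ (r * t) := by rw [h2 a ha]
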